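/- arXiv:1109.2477 — 9 statements merged into one kernel-verified Lean document; each statement's English description precedes it below -/
import Mathlib

section
/- Let K ⊆ ℝⁿ be a convex body with b(K) = 0 and x ∈ K. Then (1 − ‖x‖_K)(K ∩ −K) ⊆ (K − x) ∩ (x − K). -/
open Set Pointwise

/-- For a convex body `K` with `0 ∈ int K` and `x ∈ K`,
`(1 − ‖x‖_K) • (K ∩ -K) ⊆ (K − x) ∩ (x − K)`. -/
theorem scaled_sym_subset (n : ℕ) (K : Set (Fin n → ℝ))
    (hconv : Convex ℝ K) (hcomp : IsCompact K) (hint : 0 ∈ interior K)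
    (x : Fin n → ℝ) (hx : x ∈ K) :
    (1 - gauge K x) • (K ∩ -K) ⊆ ((· - x) '' K) ∩ ((x - ·) '' K) := by
  set t := gauge K x with ht
  have hnhds : K ∈ nhds (0 : Fin n → ℝ) := mem_interior_iff_mem_nhds.mp hint
  have ht0 : 0 ≤ t := gauge_nonneg x
  have ht1 : t ≤ 1 := gauge_le_one_of_mem hx
  have key : ∀ u ∈ K, (1 - t) • u + x ∈ K := by
    intro u hu
    rcases eq_or_lt_of_le ht0 with h0 | h0
    · have hxz : x = 0 := by
        have habs : Absorbent ℝ K := absorbent_nhds_zero hnhds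
        have hbdd : Bornology.IsVonNBounded ℝ K := hcomp.totallyBounded.isVonNBounded ℝ
        exact (gauge_eq_zero habs hbdd).mp h0.symm
      simpa [hxz, ← h0] using hu
    · have hxm : t⁻¹ • x ∈ K := by
        have : gauge K (t⁻¹ • x) ≤ 1 := by
          rw [gauge_smul_of_nonneg (by positivity)]
          simp [← ht, smul_eq_mul, inv_mul_cancel₀ h0.ne']
        have := (gauge_le_one_iff_mem_closure hconv hnhds).mp this
        rwa [hcomp.isClosed.closure_eq] at this
      have := hconv (a := 1 - t) (b := t) hu hxm (by linarith) ht0 (by ring)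
      simpa [smul_smul, mul_inv_cancel₀ h0.ne'] using this
  rintro z ⟨y, ⟨hyK, hyNK⟩, rfl⟩
  refine ⟨⟨(1 - t) • y + x, key y hyK, by module⟩,
    ⟨x - (1 - t) • y, ?_, by module⟩⟩
  have := key (-y) (by simpa using hyNK)
  simpa [sub_eq_add_neg, add_comm] using this
end

section
/- Let K ⊆ ℝⁿ be a convex body and x, y ∈ int(K) with max(‖x−y‖_{K−y}, ‖y−x‖_{K−y}) ≤ α < 1. Then for every z ∈ ℝⁿ, ‖z − y‖_{K−y} ≤ ‖z − x‖_{K−x} + α·|1 − ‖z − x‖_{K−x}|. -/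
open Set Pointwise

/-- Recentring estimate: if `x, y ∈ int K` with
`max(‖x−y‖_{K−y}, ‖y−x‖_{K−y}) ≤ α < 1`, then for every `z`,
`‖z − y‖_{K−y} ≤ ‖z − x‖_{K−x} + α·|1 − ‖z − x‖_{K−x}|`. -/
theorem gauge_recenter_le (n : ℕ) (K : Set (Fin n → ℝ))
    (hconv : Convex ℝ K) (hcomp : IsCompact K)
    (x y : Fin n → ℝ) (hx : x ∈ interior K) (hy : y ∈ interior K) (α : ℝ)
    (hα : max (gauge ((· - y) '' K) (x - y)) (gauge ((· - y) '' K) (y - x)) ≤ α)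
    (hα1 : α < 1) (z : Fin n → ℝ) :
    gauge ((· - y) '' K) (z - y) ≤
      gauge ((· - x) '' K) (z - x) + α * |1 - gauge ((· - x) '' K) (z - x)| := by
  have key : ∀ c : Fin n → ℝ, c ∈ interior K →
      Convex ℝ ((· - c) '' K) ∧ IsClosed ((· - c) '' K) ∧
        ((· - c) '' K) ∈ nhds (0 : Fin n → ℝ) := by
    intro c hc
    have hconv' : Convex ℝ ((· - c) '' K) := by
      have h : (· - c) '' K = (fun p => -c + p) '' K := by
        ext w; simp [sub_eq_neg_add]
      rw [h]; exact hconv.translate _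
    have hcl : IsClosed ((· - c) '' K) :=
      (hcomp.image (continuous_id.sub continuous_const)).isClosed
    have h0 : ((· - c) '' K) ∈ nhds (0 : Fin n → ℝ) := by
      have him : (Homeomorph.subRight c) '' interior K = interior ((· - c) '' K) := by
        simpa using (Homeomorph.subRight c).image_interior K
      have : (0 : Fin n → ℝ) ∈ interior ((· - c) '' K) := by
        rw [← him]
        exact ⟨c, hc, by simp⟩
      exact mem_interior_iff_mem_nhds.1 this
    exact ⟨hconv', hcl, h0⟩
  obtain ⟨hSconv, hScl, hS0⟩ := key y hy
  obtain ⟨hTconv, hTcl, hT0⟩ := key x hx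
  have hSabs : Absorbent ℝ ((· - y) '' K) := absorbent_nhds_zero hS0
  have hα0 : 0 ≤ α := le_trans (le_trans (gauge_nonneg _) (le_max_left _ _)) hα
  have hαxy : gauge ((· - y) '' K) (x - y) ≤ α := le_trans (le_max_left _ _) hα
  have hαyx : gauge ((· - y) '' K) (y - x) ≤ α := le_trans (le_max_right _ _) hα
  set t : ℝ := gauge ((· - x) '' K) (z - x) with ht
  have ht0 : 0 ≤ t := gauge_nonneg _
  rcases eq_or_lt_of_le ht0 with h0 | hpos
  · -- t = 0, so z = x
    have hb : Bornology.IsVonNBounded ℝ ((· - x) '' K) :=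
      (NormedSpace.isVonNBounded_iff ℝ).2
        ((hcomp.image (continuous_id.sub continuous_const)).isBounded)
    have hTabs : Absorbent ℝ ((· - x) '' K) := absorbent_nhds_zero hT0
    have hzx : z - x = 0 := (gauge_eq_zero hTabs hb).1 h0.symm
    have hzy : z - y = x - y := by
      have : z = x := by
        have := sub_eq_zero.1 hzx; exact this
      rw [this]
    rw [hzy, ← h0]
    simpa using hαxy
  · -- t > 0, get k ∈ K with z - x = t • (k - x)
    have hmem : t⁻¹ • (z - x) ∈ (· - x) '' K := by
      have hg : gauge ((· - x) '' K) (t⁻¹ • (z - x)) ≤ 1 := by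
        rw [gauge_smul_of_nonneg (inv_nonneg.2 ht0)]
        rw [smul_eq_mul, ← ht, inv_mul_cancel₀ hpos.ne']
      have := (gauge_le_one_iff_mem_closure hTconv hT0).1 hg
      rwa [hTcl.closure_eq] at this
    obtain ⟨k, hk, hke⟩ := hmem
    have hzx : z - x = t • (k - x) := by
      have hke' : k - x = t⁻¹ • (z - x) := hke
      have : t • (k - x) = t • (t⁻¹ • (z - x)) := by rw [hke']
      rw [this, smul_inv_smul₀ hpos.ne']
    have hdecomp : z - y = t • (k - y) + (1 - t) • (x - y) := by
      linear_combination (norm := module) hzx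
    have hksub : gauge ((· - y) '' K) (k - y) ≤ 1 :=
      gauge_le_one_of_mem ⟨k, hk, rfl⟩
    have hadd : gauge ((· - y) '' K) (z - y) ≤
        gauge ((· - y) '' K) (t • (k - y)) + gauge ((· - y) '' K) ((1 - t) • (x - y)) := by
      rw [hdecomp]; exact gauge_add_le hSconv hSabs _ _
    have h1 : gauge ((· - y) '' K) (t • (k - y)) ≤ t := by
      rw [gauge_smul_of_nonneg ht0]
      calc t • gauge ((· - y) '' K) (k - y) ≤ t * 1 := by
            simpa [smul_eq_mul] using mul_le_mul_of_nonneg_left hksub ht0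
        _ = t := mul_one t
    rcases le_or_gt t 1 with hle | hgt
    · have h2 : gauge ((· - y) '' K) ((1 - t) • (x - y)) ≤ (1 - t) * α := by
        rw [gauge_smul_of_nonneg (by linarith : (0:ℝ) ≤ 1 - t)]
        simpa [smul_eq_mul] using mul_le_mul_of_nonneg_left hαxy (by linarith : (0:ℝ) ≤ 1 - t)
      have habs : |1 - t| = 1 - t := abs_of_nonneg (by linarith)
      rw [habs]
      calc gauge ((· - y) '' K) (z - y) ≤ t + (1 - t) * α := by linarith
        _ = t + α * (1 - t) := by ring
    · have hsw : (1 - t) • (x - y) = (t - 1) • (y - x) := by module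
      have h2 : gauge ((· - y) '' K) ((1 - t) • (x - y)) ≤ (t - 1) * α := by
        rw [hsw, gauge_smul_of_nonneg (by linarith : (0:ℝ) ≤ t - 1)]
        simpa [smul_eq_mul] using mul_le_mul_of_nonneg_left hαyx (by linarith : (0:ℝ) ≤ t - 1)
      have habs : |1 - t| = t - 1 := by rw [abs_of_nonpos (by linarith)]; ring
      rw [habs]
      calc gauge ((· - y) '' K) (z - y) ≤ t + (t - 1) * α := by linarith
        _ = t + α * (t - 1) := by ring
end

section
/- Let K ⊆ ℝⁿ be a convex body and x, y ∈ int(K) with max(‖x−y‖_{K−y}, ‖y−x‖_{K−y}) ≤ α < 1. Then y − x ∈ (α/(1−α))(K − x) and x − y ∈ (α/(1−α))(K − x). -/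
open Set Pointwise

/-- If `x, y ∈ int K` with `max(‖x−y‖_{K−y}, ‖y−x‖_{K−y}) ≤ α < 1`, then
`y − x ∈ (α/(1−α))(K − x)` and `x − y ∈ (α/(1−α))(K − x)`. -/
theorem diff_mem_scaled_recentered (n : ℕ) (K : Set (Fin n → ℝ))
    (hconv : Convex ℝ K) (hcomp : IsCompact K)
    (x y : Fin n → ℝ) (hx : x ∈ interior K) (hy : y ∈ interior K) (α : ℝ)
    (hα : max (gauge ((· - y) '' K) (x - y)) (gauge ((· - y) '' K) (y - x)) ≤ α)
    (hα1 : α < 1) :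
    y - x ∈ (α / (1 - α)) • ((· - x) '' K) ∧
      x - y ∈ (α / (1 - α)) • ((· - x) '' K) := by
  set C : Set (Fin n → ℝ) := (· - y) '' K with hC
  have hCconv : Convex ℝ C := by
    have : C = (fun a => -y + a) '' K := by
      ext z; simp [hC, sub_eq_neg_add]
    rw [this]
    exact hconv.translate (-y)
  have hCcomp : IsCompact C := hcomp.image (continuous_id.sub continuous_const)
  have hCclosed : IsClosed C := hCcomp.isClosed
  have h0 : (0 : Fin n → ℝ) ∈ interior C := by
    have hopen : IsOpenMap (fun a : Fin n → ℝ => a - y) := (Homeomorph.subRight y).isOpenMap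
    have h' : y - y ∈ interior C := hopen.image_interior_subset K ⟨y, hy, rfl⟩
    simpa using h'
  have hnhds : C ∈ nhds (0 : Fin n → ℝ) := mem_interior_iff_mem_nhds.mp h0
  have habs : Absorbent ℝ C := absorbent_nhds_zero hnhds
  have hbdd : Bornology.IsVonNBounded ℝ C := by
    rw [NormedSpace.isVonNBounded_iff]
    exact hCcomp.isBounded
  have hg1 : gauge C (x - y) ≤ α := le_trans (le_max_left _ _) hα
  have hg2 : gauge C (y - x) ≤ α := le_trans (le_max_right _ _) hα
  have hα0 : 0 ≤ α := le_trans (gauge_nonneg _) hg1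
  -- membership from gauge ≤ 1
  have hmem : ∀ z : Fin n → ℝ, gauge C z ≤ 1 → z ∈ C := by
    intro z hz
    have := (gauge_le_one_iff_mem_closure hCconv hnhds).mp hz
    rwa [hCclosed.closure_eq] at this
  rcases eq_or_lt_of_le hα0 with hα0' | hα0'
  · -- α = 0 : then x = y
    have hxy : x - y = 0 := by
      have hz : gauge C (x - y) = 0 :=
        le_antisymm (le_of_le_of_eq hg1 hα0'.symm) (gauge_nonneg _)
      rwa [gauge_eq_zero habs hbdd] at hz
    have hxy' : x = y := by
      have := sub_eq_zero.mp hxy; exact this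
    subst hxy'
    have : (α / (1 - α)) = 0 := by rw [← hα0']; simp
    have hne : ((· - x) '' K).Nonempty := ⟨x - x, x, interior_subset hx, rfl⟩
    rw [this, zero_smul_set hne]
    simp
  · -- α > 0
    have h1α : (0:ℝ) < 1 - α := by linarith
    set w : Fin n → ℝ := y - x with hw
    -- first: y - x
    have key1 : ((1 - 2*α)/α) • w ∈ C := by
      apply hmem
      rcases le_or_gt 0 (1 - 2*α) with ht | ht
      · have hratio : (0:ℝ) ≤ (1 - 2*α)/α := div_nonneg ht hα0'.le
        rw [gauge_smul_of_nonneg hratio, smul_eq_mul]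
        calc (1 - 2*α)/α * gauge C w ≤ (1 - 2*α)/α * α :=
              mul_le_mul_of_nonneg_left hg2 hratio
          _ = 1 - 2*α := by field_simp
          _ ≤ 1 := by linarith
      · have hratio : (0:ℝ) ≤ (2*α - 1)/α := div_nonneg (by linarith) hα0'.le
        have : ((1 - 2*α)/α) • w = ((2*α - 1)/α) • (x - y) := by
          rw [hw]; rw [show x - y = -(y - x) by ring]
          rw [smul_neg, ← neg_smul]; ring_nf
        rw [this, gauge_smul_of_nonneg hratio, smul_eq_mul]
        calc (2*α - 1)/α * gauge C (x - y) ≤ (2*α - 1)/α * α :=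
              mul_le_mul_of_nonneg_left hg1 hratio
          _ = 2*α - 1 := by field_simp
          _ ≤ 1 := by linarith
    have key2 : (1/α) • (x - y) ∈ C := by
      apply hmem
      have hratio : (0:ℝ) ≤ 1/α := by positivity
      rw [gauge_smul_of_nonneg hratio, smul_eq_mul]
      calc 1/α * gauge C (x - y) ≤ 1/α * α := mul_le_mul_of_nonneg_left hg1 hratio
        _ = 1 := by field_simp
    constructor
    · obtain ⟨k, hk, hke⟩ := key1
      refine ⟨k - x, ⟨k, hk, rfl⟩, ?_⟩
      have hk' : k = ((1 - 2*α)/α) • w + y := sub_eq_iff_eq_add.mp hke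
      show (α / (1 - α)) • (k - x) = w
      rw [hk']
      have : ((1 - 2*α)/α) • w + y - x = ((1-α)/α) • w := by
        rw [hw]
        have : y - x = (1:ℝ) • (y - x) := (one_smul _ _).symm
        rw [show ((1 - 2*α)/α) • (y-x) + y - x = ((1 - 2*α)/α) • (y-x) + (1:ℝ) • (y-x) by
          rw [one_smul]; abel, ← add_smul]
        congr 1; field_simp; ring
      rw [this, smul_smul]
      have : α / (1-α) * ((1-α)/α) = 1 := by field_simp
      rw [this, one_smul]
    · obtain ⟨k, hk, hke⟩ := key2
      refine ⟨k - x, ⟨k, hk, rfl⟩, ?_⟩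
      have hk' : k = (1/α) • (x - y) + y := sub_eq_iff_eq_add.mp hke
      show (α / (1 - α)) • (k - x) = x - y
      rw [hk']
      have : (1/α) • (x - y) + y - x = ((1-α)/α) • (x - y) := by
        rw [show (1/α) • (x-y) + y - x = (1/α) • (x-y) + (-1:ℝ) • (x-y) by
          rw [neg_one_smul]; abel, ← add_smul]
        congr 1; field_simp; ring
      rw [this, smul_smul]
      have : α / (1-α) * ((1-α)/α) = 1 := by field_simp
      rw [this, one_smul]
end

section
/- Let K ⊆ ℝⁿ be a convex body and x, y ∈ int(K) with max(‖x−y‖_{K−y}, ‖y−x‖_{K−y}) ≤ α < 1. Then for every z ∈ ℝⁿ, ‖z − x‖_{K−x} ≤ ‖z − y‖_{K−y} + (α/(1−α))·|1 − ‖z − y‖_{K−y}|. -/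
open Set Pointwise

lemma gr_facts {n : ℕ} (K : Set (Fin n → ℝ)) (hconv : Convex ℝ K) (hcomp : IsCompact K)
    (c : Fin n → ℝ) (hc : c ∈ interior K) :
    Convex ℝ ((· - c) '' K) ∧ ((· - c) '' K) ∈ nhds 0 ∧ IsClosed ((· - c) '' K) ∧
      Bornology.IsVonNBounded ℝ ((· - c) '' K) := by
  have himg : (· - c) '' K = (fun z => -c + z) '' K := by
    apply Set.image_congr'
    intro z
    rw [sub_eq_neg_add]
  refine ⟨?_, ?_, ?_, ?_⟩
  · rw [himg]; exact hconv.translate (-c)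
  · have h0 : (0 : Fin n → ℝ) ∈ interior ((· - c) '' K) := by
      have h1 : (Homeomorph.subRight c) '' interior K = interior ((Homeomorph.subRight c) '' K) :=
        (Homeomorph.subRight c).image_interior K
      have hmem : (0 : Fin n → ℝ) ∈ (Homeomorph.subRight c) '' interior K :=
        ⟨c, hc, by simp⟩
      rw [h1] at hmem
      simpa [Homeomorph.subRight] using hmem
    exact mem_interior_iff_mem_nhds.1 h0
  · exact ((hcomp.image (continuous_id.sub continuous_const)).isClosed)
  · exact NormedSpace.isVonNBounded_of_isBounded _
      ((hcomp.image (continuous_id.sub continuous_const)).isBounded)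

lemma gr_mem_smul {E : Type*} [NormedAddCommGroup E] [NormedSpace ℝ E]
    (S : Set E) (hc : Convex ℝ S) (h0 : S ∈ nhds (0 : E)) (hcl : IsClosed S)
    {r : ℝ} (hr : 0 < r) {w : E} (h : gauge S w ≤ r) : w ∈ r • S := by
  have h1 : gauge S (r⁻¹ • w) ≤ 1 := by
    rw [gauge_smul_of_nonneg (inv_nonneg.2 hr.le), smul_eq_mul]
    rw [inv_mul_le_one₀ hr]
    simpa using h
  have hmem := (gauge_le_one_iff_mem_closure hc h0).1 h1
  rw [hcl.closure_eq] at hmem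
  exact ⟨r⁻¹ • w, hmem, by simp [smul_smul, mul_inv_cancel₀ hr.ne']⟩

/-- If `x, y ∈ int K` with `max(‖x−y‖_{K−y}, ‖y−x‖_{K−y}) ≤ α < 1`, then for
every `z`, `‖z − x‖_{K−x} ≤ ‖z − y‖_{K−y} + (α/(1−α))·|1 − ‖z − y‖_{K−y}|`. -/
theorem gauge_recenter_le' (n : ℕ) (K : Set (Fin n → ℝ))
    (hconv : Convex ℝ K) (hcomp : IsCompact K)
    (x y : Fin n → ℝ) (hx : x ∈ interior K) (hy : y ∈ interior K) (α : ℝ)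
    (hα : max (gauge ((· - y) '' K) (x - y)) (gauge ((· - y) '' K) (y - x)) ≤ α)
    (hα1 : α < 1) (z : Fin n → ℝ) :
    gauge ((· - x) '' K) (z - x) ≤
      gauge ((· - y) '' K) (z - y) +
        (α / (1 - α)) * |1 - gauge ((· - y) '' K) (z - y)| := by
  obtain ⟨hSyc, hSyn, hSycl, hSyb⟩ := gr_facts K hconv hcomp y hy
  obtain ⟨hSxc, hSxn, hSxcl, hSxb⟩ := gr_facts K hconv hcomp x hx
  have hSya : Absorbent ℝ ((· - y) '' K) := absorbent_nhds_zero hSyn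
  have hSxa : Absorbent ℝ ((· - x) '' K) := absorbent_nhds_zero hSxn
  have hxyα : gauge ((· - y) '' K) (x - y) ≤ α := le_trans (le_max_left _ _) hα
  have hyxα : gauge ((· - y) '' K) (y - x) ≤ α := le_trans (le_max_right _ _) hα
  have hα0 : 0 ≤ α := le_trans (gauge_nonneg _) hxyα
  set t := gauge ((· - y) '' K) (z - y) with ht
  have ht0 : 0 ≤ t := gauge_nonneg _
  rcases eq_or_lt_of_le hα0 with hα0' | hα0'
  · -- α = 0, hence x = y
    have hyx0 : y - x = 0 := (gauge_eq_zero hSya hSyb).1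
      (le_antisymm (hα0' ▸ hyxα) (gauge_nonneg _))
    obtain rfl : x = y := (sub_eq_zero.1 hyx0).symm
    rw [← hα0']
    simp [ht]
  · have h1α : 0 < 1 - α := by linarith
    have h1α' : 0 < 1 + α := by linarith
    -- k₁ : α • (k₁ - y) = y - x
    obtain ⟨w₁, hw₁, hw₁e⟩ := Set.mem_smul_set.1 (gr_mem_smul _ hSyc hSyn hSycl hα0' hyxα)
    obtain ⟨k₁, hk₁K, rfl⟩ := hw₁
    -- k₂ : α • (k₂ - y) = x - y
    obtain ⟨w₂, hw₂, hw₂e⟩ := Set.mem_smul_set.1 (gr_mem_smul _ hSyc hSyn hSycl hα0' hxyα)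
    obtain ⟨k₂, hk₂K, rfl⟩ := hw₂
    -- y = x + (α/(1+α)) • (k₁ - x)
    have e1 : (1 + α) • (y - x) = α • (k₁ - x) := by
      have expand : α • (k₁ - x) = α • (k₁ - y) + α • (y - x) := by module
      rw [expand, hw₁e]; module
    have e2 : y - x = ((1 + α)⁻¹ * α) • (k₁ - x) := by
      have h := congrArg (fun v => (1 + α)⁻¹ • v) e1
      simpa [smul_smul, inv_mul_cancel₀ h1α'.ne'] using h
    have hy1 : y = x + ((1 + α)⁻¹ * α) • (k₁ - x) := by rw [← e2]; abel
    -- y = x - (α/(1-α)) • (k₂ - x)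
    have e3 : (1 - α) • (x - y) = α • (k₂ - x) := by
      have expand : α • (k₂ - x) = α • (k₂ - y) - α • (x - y) := by module
      rw [expand, hw₂e]; module
    have e4 : x - y = ((1 - α)⁻¹ * α) • (k₂ - x) := by
      have h := congrArg (fun v => (1 - α)⁻¹ • v) e3
      simpa [smul_smul, inv_mul_cancel₀ h1α.ne'] using h
    have hy2 : y = x - ((1 - α)⁻¹ * α) • (k₂ - x) := by rw [← e4]; abel
    have hcoef : (1 + α)⁻¹ * α ≤ α / (1 - α) := by
      rw [inv_mul_eq_div, div_le_div_iff₀ h1α' h1α]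
      nlinarith
    rcases le_or_gt t 1 with htle | htgt
    · rw [abs_of_nonneg (by linarith : (0:ℝ) ≤ 1 - t)]
      rcases eq_or_lt_of_le ht0 with ht0' | ht0'
      · -- t = 0, so z = y
        have hz0 : z - y = 0 := (gauge_eq_zero hSya hSyb).1 ht0'.symm
        have hzx : z - x = ((1 + α)⁻¹ * α) • (k₁ - x) := by
          have : z - x = (z - y) + (y - x) := by abel
          rw [this, hz0, e2, zero_add]
        have hb : gauge ((· - x) '' K) (z - x) ≤ (1 + α)⁻¹ * α := by
          rw [hzx, gauge_smul_of_nonneg (by positivity : (0:ℝ) ≤ (1 + α)⁻¹ * α), smul_eq_mul]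
          calc (1 + α)⁻¹ * α * gauge ((· - x) '' K) (k₁ - x)
              ≤ (1 + α)⁻¹ * α * 1 := by
                have : gauge ((· - x) '' K) (k₁ - x) ≤ 1 :=
                  gauge_le_one_of_mem ⟨k₁, hk₁K, rfl⟩
                exact mul_le_mul_of_nonneg_left this (by positivity)
            _ = (1 + α)⁻¹ * α := mul_one _
        rw [← ht0']
        calc gauge ((· - x) '' K) (z - x) ≤ (1 + α)⁻¹ * α := hb
          _ ≤ α / (1 - α) := hcoef
          _ = 0 + α / (1 - α) * (1 - 0) := by ring
      · -- 0 < t ≤ 1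
        obtain ⟨w, hw, hwe⟩ := Set.mem_smul_set.1 (gr_mem_smul _ hSyc hSyn hSycl ht0' ht.ge)
        obtain ⟨k, hkK, rfl⟩ := hw
        have hz' : z = y + t • (k - y) := by rw [hwe]; abel
        have key : z - x = t • (k - x) + ((1 - t) * ((1 + α)⁻¹ * α)) • (k₁ - x) := by
          rw [hz', hy1]; module
        have hc'0 : (0:ℝ) ≤ (1 - t) * ((1 + α)⁻¹ * α) :=
          mul_nonneg (by linarith) (by positivity)
        calc gauge ((· - x) '' K) (z - x)
            ≤ gauge ((· - x) '' K) (t • (k - x)) +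
              gauge ((· - x) '' K) (((1 - t) * ((1 + α)⁻¹ * α)) • (k₁ - x)) := by
              rw [key]; exact gauge_add_le hSxc hSxa _ _
          _ = t * gauge ((· - x) '' K) (k - x) +
              (1 - t) * ((1 + α)⁻¹ * α) * gauge ((· - x) '' K) (k₁ - x) := by
              rw [gauge_smul_of_nonneg ht0, gauge_smul_of_nonneg hc'0, smul_eq_mul, smul_eq_mul]
          _ ≤ t * 1 + (1 - t) * ((1 + α)⁻¹ * α) * 1 := by
              gcongr
              · exact gauge_le_one_of_mem ⟨k, hkK, rfl⟩
              · exact gauge_le_one_of_mem ⟨k₁, hk₁K, rfl⟩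
          _ ≤ t + α / (1 - α) * (1 - t) := by
              nlinarith [mul_le_mul_of_nonneg_left hcoef (by linarith : (0:ℝ) ≤ 1 - t)]
    · -- t > 1
      rw [abs_of_nonpos (by linarith : 1 - t ≤ (0:ℝ))]
      have ht0' : 0 < t := lt_trans one_pos htgt
      obtain ⟨w, hw, hwe⟩ := Set.mem_smul_set.1 (gr_mem_smul _ hSyc hSyn hSycl ht0' ht.ge)
      obtain ⟨k, hkK, rfl⟩ := hw
      have hz' : z = y + t • (k - y) := by rw [hwe]; abel
      have key : z - x = t • (k - x) + ((t - 1) * ((1 - α)⁻¹ * α)) • (k₂ - x) := by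
        rw [hz', hy2]; module
      have hc'0 : (0:ℝ) ≤ (t - 1) * ((1 - α)⁻¹ * α) :=
        mul_nonneg (by linarith) (by positivity)
      calc gauge ((· - x) '' K) (z - x)
          ≤ gauge ((· - x) '' K) (t • (k - x)) +
            gauge ((· - x) '' K) (((t - 1) * ((1 - α)⁻¹ * α)) • (k₂ - x)) := by
            rw [key]; exact gauge_add_le hSxc hSxa _ _
        _ = t * gauge ((· - x) '' K) (k - x) +
            (t - 1) * ((1 - α)⁻¹ * α) * gauge ((· - x) '' K) (k₂ - x) := by
            rw [gauge_smul_of_nonneg ht0, gauge_smul_of_nonneg hc'0, smul_eq_mul, smul_eq_mul]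
        _ ≤ t * 1 + (t - 1) * ((1 - α)⁻¹ * α) * 1 := by
            gcongr
            · exact gauge_le_one_of_mem ⟨k, hkK, rfl⟩
            · exact gauge_le_one_of_mem ⟨k₂, hk₂K, rfl⟩
        _ ≤ t + α / (1 - α) * -(1 - t) := by
            rw [inv_mul_eq_div]
            ring_nf
            nlinarith [div_nonneg hα0 h1α.le]
end

section
/- Let C ⊆ ℝⁿ be a convex body with 0 ∈ int(C), β > 0, and v ∈ ℝⁿ with β ≤ ‖v‖_C ≤ (3/2)β. Then (v/2) + (β/4)(C ∩ −C) ⊆ βC ∩ (v − βC). -/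
open Set Pointwise

/-- If `β ≤ ‖v‖_C ≤ (3/2)β`, then `(v/2) + (β/4)(C ∩ −C) ⊆ βC ∩ (v − βC)`. -/
theorem half_v_add_subset (n : ℕ) (C : Set (Fin n → ℝ))
    (hconv : Convex ℝ C) (hcomp : IsCompact C) (hint : 0 ∈ interior C)
    (β : ℝ) (hβ : 0 < β) (v : Fin n → ℝ)
    (hv1 : β ≤ gauge C v) (hv2 : gauge C v ≤ (3 / 2) * β) :
    (fun w => (2 : ℝ)⁻¹ • v + w) '' ((β / 4) • (C ∩ -C)) ⊆
      (β • C) ∩ ((fun c => v - c) '' (β • C)) := by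
  have hCcl : IsClosed C := hcomp.isClosed
  have hnhds : C ∈ nhds (0 : Fin n → ℝ) := mem_interior_iff_mem_nhds.mp hint
  set r : ℝ := (3 / 2) * β with hr
  have hrpos : 0 < r := by positivity
  set u : Fin n → ℝ := r⁻¹ • v with hu
  have hgu : gauge C u ≤ 1 := by
    rw [hu, gauge_smul_of_nonneg (by positivity), smul_eq_mul]
    rw [inv_mul_le_one₀ hrpos]
    exact hv2
  have huC : u ∈ C := by
    have := (gauge_le_one_iff_mem_closure hconv hnhds).mp hgu
    rwa [hCcl.closure_eq] at this
  have hvu : v = r • u := by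
    rw [hu, smul_smul, mul_inv_cancel₀ hrpos.ne', one_smul]
  rintro _ ⟨_, ⟨x, hx, rfl⟩, rfl⟩
  dsimp only
  have hxC : x ∈ C := hx.1
  have hnxC : -x ∈ C := Set.mem_neg.mp hx.2
  constructor
  · have hmem : (3 / 4 : ℝ) • u + (1 / 4 : ℝ) • x ∈ C :=
      hconv huC hxC (by norm_num) (by norm_num) (by norm_num)
    have : (2 : ℝ)⁻¹ • v + (β / 4) • x = β • ((3 / 4 : ℝ) • u + (1 / 4 : ℝ) • x) := by
      rw [hvu, hr]; module
    rw [this]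
    exact smul_mem_smul_set hmem
  · have hmem : (3 / 4 : ℝ) • u + (1 / 4 : ℝ) • (-x) ∈ C :=
      hconv huC hnxC (by norm_num) (by norm_num) (by norm_num)
    refine ⟨β • ((3 / 4 : ℝ) • u + (1 / 4 : ℝ) • (-x)), smul_mem_smul_set hmem, ?_⟩
    simp only
    rw [hvu, hr]; module
end

section
/- Let C ⊆ ℝⁿ be a γ-symmetric convex body with 0 ∈ int(C), β > 0, and v ∈ ℝⁿ with β ≤ ‖v‖_C ≤ (3/2)β. Define C_v⁺ = βC ∩ (v − βC) and C_v⁻ = (βC − v) ∩ (−βC). Then vol(C_v⁺) = vol(C_v⁻) ≥ (γ/4)ⁿ vol(βC). -/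
open Set Pointwise MeasureTheory

/-- Intersection lemma: for a `γ`-symmetric convex body `C` and `β ≤ ‖v‖_C ≤ (3/2)β`,
the bodies `C_v⁺ = βC ∩ (v − βC)` and `C_v⁻ = (βC − v) ∩ (−βC)` have equal volume,
at least `(γ/4)ⁿ vol(βC)`. -/
theorem intersection_lemma (n : ℕ) (C : Set (Fin n → ℝ))
    (hconv : Convex ℝ C) (hcomp : IsCompact C) (hint : 0 ∈ interior C)
    (γ : ℝ) (hγ0 : 0 < γ) (hγ1 : γ ≤ 1)
    (hsym : ENNReal.ofReal (γ ^ n) * volume C ≤ volume (C ∩ -C))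
    (β : ℝ) (hβ : 0 < β) (v : Fin n → ℝ)
    (hv1 : β ≤ gauge C v) (hv2 : gauge C v ≤ (3 / 2) * β) :
    volume ((β • C) ∩ ((fun c => v - c) '' (β • C))) =
        volume (((fun c => c - v) '' (β • C)) ∩ (-(β • C))) ∧
      ENNReal.ofReal ((γ / 4) ^ n) * volume (β • C) ≤
        volume ((β • C) ∩ ((fun c => v - c) '' (β • C))) := by
  have hCnhds : C ∈ nhds (0 : Fin n → ℝ) := mem_interior_iff_mem_nhds.1 hint
  have habs : Absorbent ℝ C := absorbent_nhds_zero hCnhds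
  have hclosed : IsClosed C := hcomp.isClosed
  have hmem_of_gauge : ∀ x : Fin n → ℝ, gauge C x ≤ 1 → x ∈ C := fun x hx => by
    have := (gauge_le_one_iff_mem_closure hconv hCnhds).1 hx
    rwa [hclosed.closure_eq] at this
  constructor
  · have hset : ((fun c => c - v) '' (β • C)) ∩ (-(β • C)) =
        -((β • C) ∩ ((fun c => v - c) '' (β • C))) := by
      ext x
      simp only [Set.mem_inter_iff, Set.mem_neg, Set.mem_image]
      constructor
      · rintro ⟨⟨c, hc, rfl⟩, h2⟩
        exact ⟨h2, c, hc, by abel⟩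
      · rintro ⟨h1, c, hc, hvc⟩
        exact ⟨⟨c, hc, by rw [← neg_eq_iff_eq_neg] at hvc; rw [← hvc]; abel⟩, h1⟩
    rw [hset, Measure.measure_neg]
  · -- lower bound
    set K : Set (Fin n → ℝ) := C ∩ -C with hK
    have hsub : (fun x => v / 2 + x) '' ((β / 4) • K) ⊆
        (β • C) ∩ ((fun c => v - c) '' (β • C)) := by
      rintro x ⟨y, ⟨k, hk, rfl⟩, rfl⟩
      have hk1 : gauge C k ≤ 1 := gauge_le_one_of_mem hk.1
      have hk2 : gauge C (-k) ≤ 1 := gauge_le_one_of_mem (Set.mem_neg.1 hk.2)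
      have hv2' : gauge C (v / 2) ≤ (3 / 4) * β := by
        have : v / 2 = (2⁻¹ : ℝ) • v := by
          ext i; simp [Pi.div_apply]; ring
        rw [this, gauge_smul_of_nonneg (by norm_num : (0:ℝ) ≤ 2⁻¹)]
        simp only [smul_eq_mul]
        nlinarith
      have hg1 : gauge C (v / 2 + (β / 4) • k) ≤ β := by
        calc gauge C (v / 2 + (β / 4) • k)
            ≤ gauge C (v / 2) + gauge C ((β / 4) • k) := gauge_add_le hconv habs _ _
          _ ≤ (3 / 4) * β + (β / 4) * 1 := by
              have := gauge_smul_of_nonneg (s := C) (by positivity : (0:ℝ) ≤ β / 4) (x := k)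
              rw [this]
              simp only [smul_eq_mul]
              have : (β / 4) * gauge C k ≤ (β / 4) * 1 :=
                mul_le_mul_of_nonneg_left hk1 (by positivity)
              linarith
          _ = β := by ring
      have hg2 : gauge C (v / 2 + (β / 4) • (-k)) ≤ β := by
        calc gauge C (v / 2 + (β / 4) • (-k))
            ≤ gauge C (v / 2) + gauge C ((β / 4) • (-k)) := gauge_add_le hconv habs _ _
          _ ≤ (3 / 4) * β + (β / 4) * 1 := by
              have := gauge_smul_of_nonneg (s := C) (by positivity : (0:ℝ) ≤ β / 4) (x := -k)
              rw [this]
              simp only [smul_eq_mul]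
              have : (β / 4) * gauge C (-k) ≤ (β / 4) * 1 :=
                mul_le_mul_of_nonneg_left hk2 (by positivity)
              linarith
          _ = β := by ring
      have hmemβ : ∀ z : Fin n → ℝ, gauge C z ≤ β → z ∈ β • C := by
        intro z hz
        rw [Set.mem_smul_set_iff_inv_smul_mem₀ hβ.ne']
        apply hmem_of_gauge
        rw [gauge_smul_of_nonneg (by positivity : (0:ℝ) ≤ β⁻¹)]
        simp only [smul_eq_mul]
        rw [inv_mul_le_iff₀ hβ, mul_one]
        exact hz
      refine ⟨hmemβ _ hg1, ⟨v / 2 + (β / 4) • (-k), hmemβ _ hg2, ?_⟩⟩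
      ext i
      have h2 : (2 : Fin n → ℝ) i = 2 := rfl
      simp only [Pi.sub_apply, Pi.add_apply, Pi.smul_apply, Pi.neg_apply, Pi.div_apply,
        smul_eq_mul, h2]
      ring
    have hfinrank : Module.finrank ℝ (Fin n → ℝ) = n := Module.finrank_fin_fun ℝ
    have htrans : volume ((fun x => v / 2 + x) '' ((β / 4) • K)) =
        volume ((β / 4) • K) := by
      rw [Set.image_add_left, measure_preimage_add]
    have hscale : volume ((β / 4) • K) = ENNReal.ofReal ((β / 4) ^ n) * volume K := by
      rw [Measure.addHaar_smul_of_nonneg volume (by positivity : (0:ℝ) ≤ β / 4), hfinrank]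
    have hscaleβ : volume (β • C) = ENNReal.ofReal (β ^ n) * volume C := by
      rw [Measure.addHaar_smul_of_nonneg volume hβ.le, hfinrank]
    calc ENNReal.ofReal ((γ / 4) ^ n) * volume (β • C)
        = ENNReal.ofReal ((β / 4) ^ n) * (ENNReal.ofReal (γ ^ n) * volume C) := by
          rw [hscaleβ, ← mul_assoc, ← mul_assoc, ← ENNReal.ofReal_mul (by positivity),
            ← ENNReal.ofReal_mul (by positivity)]
          congr 2
          ring
      _ ≤ ENNReal.ofReal ((β / 4) ^ n) * volume K := by
          exact mul_le_mul_right hsym _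
      _ = volume ((fun x => v / 2 + x) '' ((β / 4) • K)) := by rw [htrans, hscale]
      _ ≤ volume ((β • C) ∩ ((fun c => v - c) '' (β • C))) := measure_mono hsub
end

section
/- Let C ⊆ ℝⁿ be a convex body with 0 ∈ int(C), β > 0, and v ∈ ℝⁿ with β ≤ ‖v‖_C ≤ (3/2)β. Define C_v⁺ = βC ∩ (v − βC) and C_v⁻ = (βC − v) ∩ (−βC). Then int(C_v⁺) ∩ int(C_v⁻) = ∅. -/
open Set Pointwise

/-- For `β ≤ ‖v‖_C ≤ (3/2)β`, the interiors of `C_v⁺ = βC ∩ (v − βC)` and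
`C_v⁻ = (βC − v) ∩ (−βC)` are disjoint. -/
theorem interiors_disjoint (n : ℕ) (C : Set (Fin n → ℝ))
    (hconv : Convex ℝ C) (hcomp : IsCompact C) (hint : 0 ∈ interior C)
    (β : ℝ) (hβ : 0 < β) (v : Fin n → ℝ)
    (hv1 : β ≤ gauge C v) (hv2 : gauge C v ≤ (3 / 2) * β) :
    interior ((β • C) ∩ ((fun c => v - c) '' (β • C))) ∩
      interior (((fun c => c - v) '' (β • C)) ∩ (-(β • C))) = ∅ := by
  have habs : Absorbent ℝ C := absorbent_nhds_zero (mem_interior_iff_mem_nhds.mp hint)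
  have key : ∀ y : Fin n → ℝ, y ∈ interior (β • C) → gauge C y < β := by
    intro y hy
    have h1 : gauge (β • C) y < 1 := interior_subset_gauge_lt_one _ hy
    rwa [gauge_smul_left_of_nonneg hβ.le, Pi.smul_apply, smul_eq_mul,
      inv_mul_lt_iff₀ hβ, mul_one] at h1
  ext x
  simp only [mem_inter_iff, mem_empty_iff_false, iff_false, not_and]
  intro hA hB
  have h2 : x ∈ interior ((fun c => v - c) '' (β • C)) :=
    interior_mono inter_subset_right hA
  have h3 : x ∈ interior ((fun c => c - v) '' (β • C)) :=
    interior_mono inter_subset_left hB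
  have e2 : (fun c => v - c) '' (β • C) = (Homeomorph.subLeft v) '' (β • C) := rfl
  have e3 : (fun c => c - v) '' (β • C) = (Homeomorph.subRight v) '' (β • C) := rfl
  rw [e2, ← Homeomorph.image_interior] at h2
  rw [e3, ← Homeomorph.image_interior] at h3
  obtain ⟨a, ha, haeq⟩ := h2
  obtain ⟨b, hb, hbeq⟩ := h3
  have hga : gauge C a < β := key a ha
  have hgb : gauge C b < β := key b hb
  have ha' : a = v - x := by
    simp only [Homeomorph.subLeft_apply] at haeq
    rw [← haeq]; abel
  have hb' : b = x + v := by
    simp only [Homeomorph.subRight_apply] at hbeq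
    rw [← hbeq]; abel
  have hab : a + b = (2 : ℝ) • v := by
    rw [ha', hb']; module
  have hchain : gauge C ((2 : ℝ) • v) ≤ gauge C a + gauge C b := by
    rw [← hab]; exact gauge_add_le hconv habs a b
  rw [gauge_smul_of_nonneg (by norm_num : (0:ℝ) ≤ 2), smul_eq_mul] at hchain
  linarith
end

section
/- Let C ⊆ ℝⁿ be a γ-symmetric convex body with 0 ∈ int(C). Then for any D > 0 and any finite set of points y₁, …, y_m ∈ D(C ∪ −C) that are pairwise far in the symmetrized gauge, i.e. ‖y_i − y_j‖_{C ∩ −C} > D/2 for all i ≠ j, one has m ≤ 2(5/γ)ⁿ. -/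
open Set Pointwise

open MeasureTheory ENNReal

/-- Packing bound: for a `γ`-symmetric convex body `C`, any points
`y₁, …, y_m ∈ D(C ∪ −C)` that are pairwise more than `D/2` apart in the gauge of
`C ∩ −C` satisfy `m ≤ 2(5/γ)ⁿ`. -/
theorem packing_bound (n : ℕ) (C : Set (Fin n → ℝ))
    (hconv : Convex ℝ C) (hcomp : IsCompact C) (hint : 0 ∈ interior C)
    (γ : ℝ) (hγ0 : 0 < γ) (hγ1 : γ ≤ 1)
    (hsym : ENNReal.ofReal (γ ^ n) * MeasureTheory.volume C ≤
      MeasureTheory.volume (C ∩ -C))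
    (D : ℝ) (hD : 0 < D) (m : ℕ) (y : Fin m → (Fin n → ℝ))
    (hy : ∀ i, y i ∈ D • (C ∪ -C))
    (hfar : ∀ i j, i ≠ j → D / 2 < gauge (C ∩ -C) (y i - y j)) :
    (m : ℝ) ≤ 2 * (5 / γ) ^ n := by
  classical
  set K : Set (Fin n → ℝ) := C ∩ -C with hKdef
  have hKconv : Convex ℝ K := hconv.inter hconv.neg
  have hKcomp : IsCompact K := hcomp.inter_right hcomp.neg.isClosed
  have hC0 : C ∈ nhds (0 : Fin n → ℝ) := mem_interior_iff_mem_nhds.mp hint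
  have hnC0 : -C ∈ nhds (0 : Fin n → ℝ) := by
    have h : ContinuousAt (fun x : Fin n → ℝ => -x) 0 := continuous_neg.continuousAt
    have := h.preimage_mem_nhds (by simpa using hC0)
    simpa using this
  have h0K : (0 : Fin n → ℝ) ∈ interior K :=
    mem_interior_iff_mem_nhds.mpr (Filter.inter_mem hC0 hnC0)
  have habs : Absorbent ℝ K := absorbent_nhds_zero (mem_interior_iff_mem_nhds.mp h0K)
  have hKsym : ∀ x ∈ K, -x ∈ K := by
    rintro x ⟨h1, h2⟩
    exact ⟨h2, by simpa using h1⟩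
  -- gauge bound for elements of `r • K`
  have hgauge_mem : ∀ r : ℝ, 0 ≤ r → ∀ z ∈ r • K, gauge K z ≤ r := by
    rintro r hr z ⟨w, hw, rfl⟩
    rw [gauge_smul_of_nonneg hr, smul_eq_mul]
    calc r * gauge K w ≤ r * 1 :=
          mul_le_mul_of_nonneg_left (gauge_le_one_of_mem hw) hr
      _ = r := mul_one r
  -- the small translated bodies
  set f : Fin m → Set (Fin n → ℝ) := fun i => y i +ᵥ (D / 4) • K with hfdef
  have hfcomp : ∀ i, IsCompact (f i) := by
    intro i
    have h1 : IsCompact ((D / 4) • K) := hKcomp.smul (D / 4)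
    show IsCompact (y i +ᵥ (D / 4) • K)
    rw [← Set.image_vadd]
    exact h1.image (continuous_const_vadd (y i))
  have hfmeas : ∀ i, MeasurableSet (f i) := fun i => (hfcomp i).measurableSet
  -- pairwise disjoint
  have hdisj : Pairwise (Function.onFun Disjoint f) := by
    intro i j hij
    rw [Function.onFun, Set.disjoint_left]
    rintro x hxi hxj
    obtain ⟨u, hu, hux⟩ := hxi
    obtain ⟨v, hv, hvx⟩ := hxj
    simp only [vadd_eq_add] at hux hvx
    have hyij : y i - y j = -u + v := by
      have : y i + u = y j + v := by rw [hux, hvx]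
      linear_combination (norm := module) this
    have h1 : gauge K (-u) ≤ D / 4 := by
      rw [gauge_neg hKsym]
      exact hgauge_mem _ (by positivity) u hu
    have h2 : gauge K v ≤ D / 4 := hgauge_mem _ (by positivity) v hv
    have h3 := gauge_add_le hKconv habs (-u) v
    rw [← hyij] at h3
    have h4 := hfar i j hij
    linarith
  -- containment
  have hsub : ∀ i, f i ⊆ (5 * D / 4) • C ∪ (5 * D / 4) • (-C) := by
    intro i x hx
    obtain ⟨u, hu, hux⟩ := hx
    obtain ⟨w, hw, rfl⟩ := hu
    simp only [vadd_eq_add] at hux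
    have hyi := hy i
    rw [smul_set_union] at hyi
    rcases hyi with hyi | hyi
    · obtain ⟨c, hc, hyc⟩ := hyi
      simp only at hyc
      left
      refine ⟨(4 / 5 : ℝ) • c + (1 / 5 : ℝ) • w,
        hconv hc hw.1 (by norm_num) (by norm_num) (by norm_num), ?_⟩
      simp only
      rw [← hux, ← hyc]
      module
    · obtain ⟨c, hc, hyc⟩ := hyi
      simp only at hyc
      right
      refine ⟨(4 / 5 : ℝ) • c + (1 / 5 : ℝ) • w,
        hconv.neg hc hw.2 (by norm_num) (by norm_num) (by norm_num), ?_⟩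
      simp only
      rw [← hux, ← hyc]
      module
  -- volume computations
  have hrank : Module.finrank ℝ (Fin n → ℝ) = n := Module.finrank_fin_fun ℝ
  have hvol_f : ∀ i, volume (f i) = ENNReal.ofReal ((D / 4) ^ n) * volume K := by
    intro i
    show volume (y i +ᵥ (D / 4) • K) = _
    rw [measure_vadd (μ := volume), Measure.addHaar_smul_of_nonneg _ (by positivity), hrank]
  have hvol_union : volume (⋃ i, f i) =
      (m : ENNReal) * (ENNReal.ofReal ((D / 4) ^ n) * volume K) := by
    rw [measure_iUnion hdisj hfmeas]
    simp [hvol_f, tsum_fintype, Finset.sum_const, mul_comm]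
  have hvol_neg : volume (-C) = volume C := by
    have h := Measure.addHaar_smul (volume : Measure (Fin n → ℝ)) (-1 : ℝ) C
    simpa using h
  have hvol_big : volume ((5 * D / 4) • C ∪ (5 * D / 4) • (-C)) ≤
      2 * ENNReal.ofReal ((5 * D / 4) ^ n) * volume C := by
    calc volume ((5 * D / 4) • C ∪ (5 * D / 4) • (-C)) ≤
        volume ((5 * D / 4) • C) + volume ((5 * D / 4) • (-C)) := measure_union_le _ _
      _ = 2 * ENNReal.ofReal ((5 * D / 4) ^ n) * volume C := by
          rw [Measure.addHaar_smul_of_nonneg _ (by positivity),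
            Measure.addHaar_smul_of_nonneg _ (by positivity), hrank, hvol_neg]
          ring
  have hkey : (m : ENNReal) * (ENNReal.ofReal ((D / 4) ^ n) * volume K) ≤
      2 * ENNReal.ofReal ((5 * D / 4) ^ n) * volume C := by
    rw [← hvol_union]
    exact le_trans (measure_mono (Set.iUnion_subset hsub)) hvol_big
  -- transfer to reals
  have hCfin : volume C ≠ ⊤ := hcomp.measure_lt_top.ne
  have hCpos : 0 < volume C := by
    have hne : (interior C).Nonempty := ⟨0, hint⟩
    exact lt_of_lt_of_le (isOpen_interior.measure_pos volume hne) (measure_mono interior_subset)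
  have hchain : ENNReal.ofReal ((m : ℝ) * ((D / 4) ^ n * γ ^ n)) * volume C ≤
      ENNReal.ofReal (2 * (5 * D / 4) ^ n) * volume C := by
    calc ENNReal.ofReal ((m : ℝ) * ((D / 4) ^ n * γ ^ n)) * volume C
        = (m : ENNReal) * (ENNReal.ofReal ((D / 4) ^ n) * (ENNReal.ofReal (γ ^ n) * volume C)) := by
          rw [ENNReal.ofReal_mul (by positivity), ENNReal.ofReal_mul (by positivity),
            ENNReal.ofReal_natCast]
          ring
      _ ≤ (m : ENNReal) * (ENNReal.ofReal ((D / 4) ^ n) * volume K) := by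
          gcongr
      _ ≤ 2 * ENNReal.ofReal ((5 * D / 4) ^ n) * volume C := hkey
      _ = ENNReal.ofReal (2 * (5 * D / 4) ^ n) * volume C := by
          rw [ENNReal.ofReal_mul (by norm_num)]
          norm_num
  have hreal : (m : ℝ) * ((D / 4) ^ n * γ ^ n) ≤ 2 * (5 * D / 4) ^ n := by
    have h := (ENNReal.mul_le_mul_iff_left hCpos.ne' hCfin).mp hchain
    exact (ENNReal.ofReal_le_ofReal_iff (by positivity)).mp h
  -- final arithmetic
  have h54 : (5 * D / 4) ^ n = 5 ^ n * (D / 4) ^ n := by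
    rw [← mul_pow]; ring_nf
  have hDn : (0:ℝ) < (D / 4) ^ n := by positivity
  have hγn : (0:ℝ) < γ ^ n := by positivity
  have hm : (m : ℝ) * γ ^ n ≤ 2 * 5 ^ n := by
    rw [h54] at hreal
    nlinarith [hreal]
  rw [div_pow, ← mul_div_assoc, le_div_iff₀ hγn]
  linarith
end

section
/- Let C ⊆ ℝⁿ be a γ-symmetric convex body with 0 ∈ int(C), β > 0, and 0 < ε ≤ 1/2. If Λ ⊆ 4β(C ∪ −C) is a set of points such that the translates x + (εβ/2)·int(C ∩ −C), x ∈ Λ, are pairwise disjoint, then |Λ| ≤ 2(9/(γε))ⁿ. -/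
open Set Pointwise
open MeasureTheory ENNReal

/-- Packing bound for the SAP output analysis: if `Λ ⊆ 4β(C ∪ −C)` and the
translates `x + (εβ/2)·int(C ∩ −C)`, `x ∈ Λ`, are pairwise disjoint, then
`|Λ| ≤ 2(9/(γε))ⁿ`. -/
theorem lambda_card_bound (n : ℕ) (C : Set (Fin n → ℝ))
    (hconv : Convex ℝ C) (hcomp : IsCompact C) (hint : 0 ∈ interior C)
    (γ : ℝ) (hγ0 : 0 < γ) (hγ1 : γ ≤ 1)
    (hsym : ENNReal.ofReal (γ ^ n) * MeasureTheory.volume C ≤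
      MeasureTheory.volume (C ∩ -C))
    (β : ℝ) (hβ : 0 < β) (ε : ℝ) (hε0 : 0 < ε) (hε : ε ≤ 1 / 2)
    (Λ : Finset (Fin n → ℝ))
    (hΛ : (Λ : Set (Fin n → ℝ)) ⊆ (4 * β) • (C ∪ -C))
    (hdisj : ∀ x ∈ Λ, ∀ y ∈ Λ, x ≠ y →
      Disjoint ((fun w => x + w) '' ((ε * β / 2) • interior (C ∩ -C)))
        ((fun w => y + w) '' ((ε * β / 2) • interior (C ∩ -C)))) :
    (Λ.card : ℝ) ≤ 2 * (9 / (γ * ε)) ^ n := by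
  classical
  have hn : Module.finrank ℝ (Fin n → ℝ) = n := Module.finrank_fin_fun ℝ
  set K := C ∩ -C with hKdef
  have hKC : K ⊆ C := inter_subset_left
  have hKnC : K ⊆ -C := inter_subset_right
  have hKconv : Convex ℝ K := hconv.inter hconv.neg
  set r : ℝ := ε * β / 2 with hrdef
  have hr0 : 0 < r := by positivity
  set S : Set (Fin n → ℝ) := r • interior K with hSdef
  have hSopen : IsOpen S := isOpen_interior.smul₀ (ne_of_gt hr0)
  have hKclosed : IsClosed K := hcomp.isClosed.inter hcomp.isClosed.neg
  have hVint : volume (interior K) = volume K := by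
    refine le_antisymm (measure_mono interior_subset) ?_
    have h1 : K ⊆ interior K ∪ frontier K := by
      nth_rewrite 1 [← hKclosed.closure_eq]
      rw [closure_eq_interior_union_frontier]
    calc volume K ≤ volume (interior K ∪ frontier K) := measure_mono h1
      _ ≤ volume (interior K) + volume (frontier K) := measure_union_le _ _
      _ = volume (interior K) := by rw [hKconv.addHaar_frontier volume, add_zero]
  have hvolS : volume S = ENNReal.ofReal (r ^ n) * volume K := by
    rw [hSdef, Measure.addHaar_smul, hn, hVint, abs_of_pos (pow_pos hr0 n)]
  have hlow : ENNReal.ofReal (r ^ n) * (ENNReal.ofReal (γ ^ n) * volume C) ≤ volume S := by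
    rw [hvolS]; exact mul_le_mul_right hsym _
  have hsub : ∀ x ∈ Λ, (fun w => x + w) '' S ⊆ (4 * β + r) • (C ∪ -C) := by
    intro x hx
    rintro _ ⟨w, hw, rfl⟩
    have hxmem : x ∈ (4 * β) • C ∪ (4 * β) • (-C) := by
      rw [← smul_set_union]; exact hΛ hx
    rw [smul_set_union]
    have h4r : (0:ℝ) ≤ 4 * β := by positivity
    rcases hxmem with hxC | hxC
    · left
      have hwC : w ∈ r • C := smul_set_mono (interior_subset.trans hKC) hw
      rw [hconv.add_smul h4r hr0.le]
      exact add_mem_add hxC hwC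
    · right
      have hwC : w ∈ r • (-C) := smul_set_mono (interior_subset.trans hKnC) hw
      rw [hconv.neg.add_smul h4r hr0.le]
      exact add_mem_add hxC hwC
  have himg : ∀ x : Fin n → ℝ, (fun w => x + w) '' S = x +ᵥ S := fun x => rfl
  have hmeas : ∀ x ∈ Λ, MeasurableSet ((fun w => x + w) '' S) := by
    intro x _
    rw [himg]
    exact (hSopen.vadd x).measurableSet
  have hdisj' : Set.PairwiseDisjoint (↑Λ) (fun x => (fun w => x + w) '' S) :=
    fun x hx y hy hxy => hdisj x hx y hy hxy
  have hsum : (Λ.card : ℝ≥0∞) * volume S ≤ volume ((4 * β + r) • (C ∪ -C)) := by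
    calc (Λ.card : ℝ≥0∞) * volume S = ∑ x ∈ Λ, volume ((fun w => x + w) '' S) := by
          rw [Finset.sum_congr rfl (fun x _ => by rw [himg, measure_vadd]),
            Finset.sum_const, nsmul_eq_mul]
      _ = volume (⋃ x ∈ Λ, (fun w => x + w) '' S) :=
          (measure_biUnion_finset hdisj' hmeas).symm
      _ ≤ volume ((4 * β + r) • (C ∪ -C)) := measure_mono (iUnion₂_subset hsub)
  have hub : volume ((4 * β + r) • (C ∪ -C)) ≤
      ENNReal.ofReal ((4 * β + r) ^ n) * (2 * volume C) := by
    rw [Measure.addHaar_smul, hn, abs_of_pos (pow_pos (by positivity) n)]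
    refine mul_le_mul_right ?_ _
    calc volume (C ∪ -C) ≤ volume C + volume (-C) := measure_union_le _ _
      _ = 2 * volume C := by rw [Measure.measure_neg, two_mul]
  have hVne : volume C ≠ 0 :=
    (Measure.measure_pos_of_nonempty_interior _ ⟨0, hint⟩).ne'
  have hVfin : volume C ≠ ⊤ := hcomp.measure_lt_top.ne
  have key : (Λ.card : ℝ≥0∞) * ENNReal.ofReal ((r * γ) ^ n) ≤
      ENNReal.ofReal (2 * (4 * β + r) ^ n) := by
    have h1 : (Λ.card : ℝ≥0∞) * ENNReal.ofReal ((r * γ) ^ n) * volume C ≤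
        ENNReal.ofReal (2 * (4 * β + r) ^ n) * volume C := by
      calc (Λ.card : ℝ≥0∞) * ENNReal.ofReal ((r * γ) ^ n) * volume C
          = (Λ.card : ℝ≥0∞) * (ENNReal.ofReal (r ^ n) * (ENNReal.ofReal (γ ^ n) * volume C)) := by
            rw [mul_pow, ENNReal.ofReal_mul (by positivity), mul_assoc, mul_assoc]
        _ ≤ (Λ.card : ℝ≥0∞) * volume S := mul_le_mul_right hlow _
        _ ≤ volume ((4 * β + r) • (C ∪ -C)) := hsum
        _ ≤ ENNReal.ofReal ((4 * β + r) ^ n) * (2 * volume C) := hub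
        _ = ENNReal.ofReal (2 * (4 * β + r) ^ n) * volume C := by
            rw [ENNReal.ofReal_mul (by norm_num), ENNReal.ofReal_ofNat]
            ring
    exact (ENNReal.mul_le_mul_iff_left hVne hVfin).mp h1
  have hrγ : (0:ℝ) < (r * γ) ^ n := pow_pos (by positivity) n
  have hcard : (Λ.card : ℝ) ≤ 2 * (4 * β + r) ^ n / (r * γ) ^ n := by
    have h2 : (Λ.card : ℝ≥0∞) ≤ ENNReal.ofReal (2 * (4 * β + r) ^ n / (r * γ) ^ n) := by
      rw [ENNReal.ofReal_div_of_pos hrγ]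
      rw [ENNReal.le_div_iff_mul_le (Or.inl (ENNReal.ofReal_pos.mpr hrγ).ne')
        (Or.inl ENNReal.ofReal_ne_top)]
      exact key
    rw [← ENNReal.ofReal_natCast] at h2
    exact (ENNReal.ofReal_le_ofReal_iff (by positivity)).mp h2
  refine hcard.trans ?_
  rw [mul_div_assoc, ← div_pow]
  have hq : (4 * β + r) / (r * γ) ≤ 9 / (γ * ε) := by
    rw [div_le_div_iff₀ (by positivity) (by positivity)]
    rw [hrdef]
    nlinarith [mul_pos hβ hγ0, mul_pos hε0 (mul_pos hβ hγ0)]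
  have hb : (0:ℝ) ≤ (4 * β + r) / (r * γ) := by positivity
  gcongr
end
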